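/- Fix d ≥ 2, let r be an arc-length parameterization of a closed curve of length 1 in ℝ^d, and let s ∈ [0, 1/2]. Then there exists t ∈ [0,1] such that ‖r(t+s) − r(t)‖ ≤ sin(πs)/π. -/

import Mathlib

open MeasureTheory Set Real Function

noncomputable section

/-- `r` is an arc-length parameterization of a closed curve of length 1 in `ℝ^d`. -/
def IsUnitClosedCurve (d : ℕ) (r : ℝ → EuclideanSpace ℝ (Fin d)) : Prop :=
  Continuous r ∧ Periodic r 1 ∧ LipschitzWith 1 r ∧
    eVariationOn r (Icc (0:ℝ) 1) = 1

/-- The length of a shortest closed curve covering `S`. -/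
def w {d : ℕ} (S : Set (EuclideanSpace ℝ (Fin d))) : ENNReal :=
  ⨅ (γ : {γ : ℝ → EuclideanSpace ℝ (Fin d) //
      Continuous γ ∧ Periodic γ 1 ∧ S ⊆ γ '' Icc (0:ℝ) 1}),
    eVariationOn γ.1 (Icc (0:ℝ) 1)

/-- A partition of `[0,1)` into `k` measurable sets of measure `1/k` each. -/
def IsEqualPartition (k : ℕ) (A : Fin k → Set ℝ) : Prop :=
  (∀ i, MeasurableSet (A i)) ∧ Pairwise (onFun Disjoint A) ∧
    (⋃ i, A i) = Ico (0:ℝ) 1 ∧ ∀ i, volume (A i) = ENNReal.ofReal (1 / k)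

def betaCurve (d k : ℕ) (r : ℝ → EuclideanSpace ℝ (Fin d)) : ENNReal :=
  ⨅ (A : {A : Fin k → Set ℝ // IsEqualPartition k A}),
    (k : ENNReal)⁻¹ * ∑ i, w (r '' A.1 i)

def betaSup (d k : ℕ) : ENNReal :=
  ⨆ (r : {r : ℝ → EuclideanSpace ℝ (Fin d) // IsUnitClosedCurve d r}),
    betaCurve d k r.1

/-- A partition of `C` into `k` nonempty sets. -/
def IsPartitionInto {α : Type*} (k : ℕ) (S : Fin k → Set α) (C : Set α) : Prop :=
  (∀ i, (S i).Nonempty) ∧ Pairwise (onFun Disjoint S) ∧ (⋃ i, S i) = C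

def gammaCurve {d : ℕ} (k : ℕ) (C : Set (EuclideanSpace ℝ (Fin d))) : ENNReal :=
  ⨅ (S : {S : Fin k → Set (EuclideanSpace ℝ (Fin d)) // IsPartitionInto k S C}),
    ⨆ i, w (S.1 i)

def gammaSup (d k : ℕ) : ENNReal :=
  ⨆ (r : {r : ℝ → EuclideanSpace ℝ (Fin d) // IsUnitClosedCurve d r}),
    gammaCurve k (r.1 '' Icc (0:ℝ) 1)

def circlePt (t : ℝ) : EuclideanSpace ℝ (Fin 2) :=
  (EuclideanSpace.equiv (Fin 2) ℝ).symm ![Real.cos t, Real.sin t]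

section ShortChordAux

open AddCircle Filter Topology ENNReal
private instance factZeroLtOneReal : Fact ((0:ℝ) < 1) := ⟨one_pos⟩

private lemma abs_sin_nat_mul_le (n : ℕ) (x : ℝ) : |Real.sin (n * x)| ≤ n * |Real.sin x| := by
  induction n with
  | zero => simp
  | succ n ih =>
    have h1 : ((n:ℝ)+1) * x = n * x + x := by ring
    push_cast
    rw [h1, Real.sin_add]
    calc |Real.sin (n*x) * Real.cos x + Real.cos (n*x) * Real.sin x|
        ≤ |Real.sin (n*x) * Real.cos x| + |Real.cos (n*x) * Real.sin x| := abs_add_le _ _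
      _ ≤ |Real.sin (n*x)| * 1 + 1 * |Real.sin x| := by
          rw [abs_mul, abs_mul]
          gcongr <;> simp [Real.abs_cos_le_one]
      _ ≤ (n:ℝ) * |Real.sin x| * 1 + 1 * |Real.sin x| := by gcongr
      _ = ((n:ℝ)+1) * |Real.sin x| := by ring

private lemma abs_sin_int_mul_le (n : ℤ) (x : ℝ) :
    |Real.sin (n * x)| ≤ |(n:ℝ)| * |Real.sin x| := by
  obtain ⟨m, hm | hm⟩ := Int.eq_nat_or_neg n
  · subst hm; simpa using abs_sin_nat_mul_le m x
  · subst hm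
    push_cast
    rw [neg_mul, Real.sin_neg, abs_neg, abs_neg]
    simpa using abs_sin_nat_mul_le m x

private lemma norm_fourier_sub_one_sq (n : ℤ) (h : ℝ) :
    ‖(fourier n (↑h : AddCircle (1:ℝ)) : ℂ) - 1‖ ^ 2 = 4 * Real.sin (π * n * h) ^ 2 := by
  rw [fourier_coe_apply]
  have e1 : (2 * ↑π * Complex.I * ↑n * ↑h / ((1:ℝ):ℂ) : ℂ)
      = ((2 * (π * n * h) : ℝ) : ℂ) * Complex.I := by push_cast; ring
  rw [e1, Complex.exp_mul_I, ← Complex.ofReal_cos, ← Complex.ofReal_sin,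
      Real.cos_two_mul, Real.sin_two_mul]
  have hcs := Real.sin_sq_add_cos_sq (π*n*h)
  set c := Real.cos (π*n*h)
  set s := Real.sin (π*n*h)
  rw [Complex.sq_norm, Complex.normSq_apply]
  simp only [Complex.add_re, Complex.sub_re, Complex.ofReal_re, Complex.mul_re,
    Complex.ofReal_im, Complex.I_re, Complex.I_im, Complex.add_im, Complex.sub_im,
    Complex.mul_im, Complex.one_re, Complex.one_im]
  linear_combination (4*c^2 - 4) * hcs


private lemma cont_integrable {E : Type*} [NormedAddCommGroup E] {g : AddCircle (1:ℝ) → E}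
    (hg : Continuous g) : Integrable g haarAddCircle :=
  hg.integrable_of_hasCompactSupport (HasCompactSupport.of_compactSpace g)

private lemma parseval_cont (g : C(AddCircle (1:ℝ), ℂ)) :
    Summable (fun n : ℤ => ‖fourierCoeff (⇑g) n‖ ^ 2) ∧
      ∑' n : ℤ, ‖fourierCoeff (⇑g) n‖ ^ 2
        = ∫ t : AddCircle (1:ℝ), ‖g t‖ ^ 2 ∂haarAddCircle := by
  set gL := ContinuousMap.toLp (E := ℂ) 2 haarAddCircle ℂ g with hgL
  have hcoeff : ∀ n, fourierCoeff (⇑gL) n = fourierCoeff (⇑g) n := fourierCoeff_toLp g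
  constructor
  · have h1 := (lp.memℓp (fourierBasis.repr gL)).summable (by norm_num)
    have h2 : (fun n : ℤ => ‖fourierBasis.repr gL n‖ ^ (2:ℝ≥0∞).toReal)
        = fun n : ℤ => ‖fourierCoeff (⇑g) n‖ ^ 2 := by
      funext n
      rw [fourierBasis_repr, hcoeff]
      norm_num
    rwa [h2] at h1
  · have heq := tsum_sq_fourierCoeff gL
    simp_rw [hcoeff] at heq
    rw [heq]
    refine integral_congr_ae ?_
    filter_upwards [ContinuousMap.coeFn_toLp (p := 2) (𝕜 := ℂ) haarAddCircle g] with x hx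
    rw [← hgL] at hx
    rw [hx]

private lemma fourier_arg_add {m : ℤ} {x y : AddCircle (1:ℝ)} :
    (fourier m (x + y) : ℂ) = fourier m x * fourier m y := by
  simp [fourier_apply, smul_add, AddCircle.toCircle_add]

private lemma fourierCoeff_shift (g : AddCircle (1:ℝ) → ℂ) (h : ℝ) (n : ℤ) :
    fourierCoeff (fun x => g (x + (h : AddCircle (1:ℝ)))) n
      = (fourier n (h : AddCircle (1:ℝ)) : ℂ) * fourierCoeff g n := by
  have step1 : fourierCoeff (fun x => g (x + (h : AddCircle (1:ℝ)))) n
      = ∫ x : AddCircle (1:ℝ), (fourier (-n) (x + (h:AddCircle (1:ℝ)) - (h:AddCircle (1:ℝ))) : ℂ)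
          • g (x + (h:AddCircle (1:ℝ))) ∂haarAddCircle := by
    unfold fourierCoeff
    congr 1
    funext x
    rw [add_sub_cancel_right]
  have step1b := integral_add_right_eq_self (μ := haarAddCircle)
    (fun y : AddCircle (1:ℝ) => (fourier (-n) (y - (h:AddCircle (1:ℝ))) : ℂ) • g y)
    ((h : AddCircle (1:ℝ)))
  rw [step1, step1b]
  have step2 : ∀ y : AddCircle (1:ℝ),
      (fourier (-n) (y - (h:AddCircle (1:ℝ))) : ℂ)
        = (fourier n (h:AddCircle (1:ℝ)) : ℂ) * fourier (-n) y := by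
    intro y
    have : y - (h:AddCircle (1:ℝ)) = y + (-(h:AddCircle (1:ℝ))) := sub_eq_add_neg _ _
    rw [this, fourier_arg_add]
    have : (fourier (-n) (-(h:AddCircle (1:ℝ))) : ℂ) = fourier n (h:AddCircle (1:ℝ)) := by
      rw [fourier_apply, fourier_apply, neg_smul, smul_neg, neg_neg]
    rw [this]
    ring
  calc ∫ y : AddCircle (1:ℝ), (fourier (-n) (y - (h:AddCircle (1:ℝ))) : ℂ) • g y ∂haarAddCircle
      = ∫ y : AddCircle (1:ℝ), (fourier n (h:AddCircle (1:ℝ)) : ℂ)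
          • ((fourier (-n) y : ℂ) • g y) ∂haarAddCircle := by
        congr 1; funext y; rw [step2 y, smul_smul, smul_eq_mul]
    _ = (fourier n (h:AddCircle (1:ℝ)) : ℂ) • ∫ y : AddCircle (1:ℝ),
          (fourier (-n) y : ℂ) • g y ∂haarAddCircle := integral_smul _ _
    _ = (fourier n (h:AddCircle (1:ℝ)) : ℂ) * fourierCoeff g n := by rw [smul_eq_mul]; rfl


private lemma key_ineq {d : ℕ} (r : ℝ → EuclideanSpace ℝ (Fin d))
    (hrc : Continuous r) (hrp : Periodic r 1) (hrl : LipschitzWith 1 r)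
    (s : ℝ) (m : ℝ) (hm0 : 0 ≤ m)
    (hmin : ∀ t : ℝ, m ≤ ‖r (t + s) - r t‖) :
    m ^ 2 ≤ Real.sin (π * s) ^ 2 / π ^ 2 := by
  classical
  have rep : ∀ x : AddCircle (1:ℝ), ∃ t : ℝ, x = (t : AddCircle (1:ℝ)) := by
    intro x; induction x using QuotientAddGroup.induction_on with | H t => exact ⟨t, rfl⟩
  have repIco : ∀ x : AddCircle (1:ℝ), ∃ t : ℝ, t ∈ Ico (0:ℝ) 1 ∧ x = (t : AddCircle (1:ℝ)) := by
    intro x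
    induction x using QuotientAddGroup.induction_on with
    | H t =>
      obtain ⟨n, hn, -⟩ := existsUnique_zsmul_near_of_pos' one_pos t
      refine ⟨t - n • 1, hn, ?_⟩
      have hmem : (n • (1:ℝ)) ∈ AddSubgroup.zmultiples (1:ℝ) := AddSubgroup.zsmul_mem_zmultiples _ _
      have habel : -t + (t - n • (1:ℝ)) = -(n • (1:ℝ)) := by abel
      rw [QuotientAddGroup.eq, habel]
      exact neg_mem hmem
  set f : Fin d → ℝ → ℂ := fun j t => ((r t j : ℝ) : ℂ) with hfdef
  have hfc : ∀ j, Continuous (f j) :=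
    fun j => Complex.continuous_ofReal.comp ((EuclideanSpace.proj j).continuous.comp hrc)
  have hfp : ∀ j, Periodic (f j) 1 := by
    intro j t
    simp only [hfdef]
    rw [hrp t]
  set F : Fin d → AddCircle (1:ℝ) → ℂ := fun j => (hfp j).lift with hFdef
  have hFcoe : ∀ j (t : ℝ), F j (t : AddCircle (1:ℝ)) = f j t := fun j t => rfl
  have hFc : ∀ j, Continuous (F j) := by
    intro j
    have h01 : f j 0 = f j (0 + 1) := (hfp j 0).symm
    have hcont : Continuous (liftIco 1 0 (f j)) := liftIco_continuous h01 ((hfc j).continuousOn)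
    have heq : F j = liftIco 1 0 (f j) := by
      funext x
      obtain ⟨t, ht, rfl⟩ := repIco x
      rw [hFcoe, liftIco_coe_apply (by rwa [zero_add])]
    rwa [heq]
  set a : Fin d → ℤ → ℝ := fun j n => ‖fourierCoeff (F j) n‖ ^ 2 with hadef
  set A : ℤ → ℝ := fun n => ∑ j, a j n with hAdef
  have ha0 : ∀ j n, 0 ≤ a j n := fun j n => sq_nonneg _
  have hA0 : ∀ n, 0 ≤ A n := fun n => Finset.sum_nonneg fun j _ => ha0 j n
  set wgt : ℝ → ℤ → ℝ := fun h n => 4 * Real.sin (π * n * h) ^ 2 with hwdef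
  have hw0 : ∀ h n, 0 ≤ wgt h n := by intro h n; simp only [hwdef]; positivity
  have hGc : ∀ (j : Fin d) (h : ℝ),
      Continuous (fun x : AddCircle (1:ℝ) => F j (x + (h:AddCircle (1:ℝ))) - F j x) :=
    fun j h => ((hFc j).comp (continuous_add_right _)).sub (hFc j)
  have hco : ∀ (j : Fin d) (h : ℝ) (n : ℤ),
      fourierCoeff (fun x => F j (x + (h:AddCircle (1:ℝ))) - F j x) n
        = ((fourier n ((h:ℝ) : AddCircle (1:ℝ)) : ℂ) - 1) * fourierCoeff (F j) n := by
    intro j h n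
    have h1 : Integrable (fun x : AddCircle (1:ℝ) =>
        (fourier (-n) x : ℂ) • F j (x + (h:AddCircle (1:ℝ)))) haarAddCircle :=
      cont_integrable ((fourier (-n)).continuous.smul ((hFc j).comp (continuous_add_right _)))
    have h2 : Integrable (fun x : AddCircle (1:ℝ) => (fourier (-n) x : ℂ) • F j x) haarAddCircle :=
      cont_integrable ((fourier (-n)).continuous.smul (hFc j))
    have heq : fourierCoeff (fun x => F j (x + (h:AddCircle (1:ℝ))) - F j x) n
        = fourierCoeff (fun x => F j (x + (h:AddCircle (1:ℝ)))) n - fourierCoeff (F j) n := by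
      unfold fourierCoeff
      rw [← integral_sub h1 h2]
      congr 1; funext x; rw [smul_sub]
    rw [heq, fourierCoeff_shift (F j) h n, sub_mul, one_mul]
  have pars : ∀ (h : ℝ) (j : Fin d),
      Summable (fun n : ℤ => wgt h n * a j n) ∧
        ∑' n : ℤ, wgt h n * a j n
          = ∫ x : AddCircle (1:ℝ), ‖F j (x + (h:AddCircle (1:ℝ))) - F j x‖ ^ 2 ∂haarAddCircle := by
    intro h j
    obtain ⟨hs1, hs2⟩ := parseval_cont ⟨_, hGc j h⟩
    simp only [ContinuousMap.coe_mk] at hs1 hs2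
    have hrw : (fun n : ℤ =>
        ‖fourierCoeff (fun x => F j (x + (h:AddCircle (1:ℝ))) - F j x) n‖ ^ 2)
        = fun n : ℤ => wgt h n * a j n := by
      funext n
      rw [hco j h n, norm_mul, mul_pow, norm_fourier_sub_one_sq n h]
    rw [hrw] at hs1 hs2
    exact ⟨hs1, hs2⟩
  have main : ∀ h : ℝ, Summable (fun n : ℤ => wgt h n * A n) ∧
      ∑' n : ℤ, wgt h n * A n
        = ∫ x : AddCircle (1:ℝ),
            (∑ j, ‖F j (x + (h:AddCircle (1:ℝ))) - F j x‖ ^ 2) ∂haarAddCircle := by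
    intro h
    have hsplit : (fun n : ℤ => wgt h n * A n) = fun n => ∑ j, wgt h n * a j n := by
      funext n; rw [hAdef]; exact Finset.mul_sum _ _ _
    have hsummable : Summable (fun n : ℤ => wgt h n * A n) := by
      rw [hsplit]
      exact (hasSum_sum fun j _ => (pars h j).1.hasSum).summable
    refine ⟨hsummable, ?_⟩
    calc ∑' n : ℤ, wgt h n * A n = ∑' n : ℤ, ∑ j, wgt h n * a j n := by rw [hsplit]
      _ = ∑ j, ∑' n : ℤ, wgt h n * a j n := Summable.tsum_finsetSum fun j _ => (pars h j).1
      _ = ∑ j, ∫ x : AddCircle (1:ℝ), ‖F j (x + (h:AddCircle (1:ℝ))) - F j x‖ ^ 2 ∂haarAddCircle :=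
          Finset.sum_congr rfl fun j _ => (pars h j).2
      _ = ∫ x : AddCircle (1:ℝ),
            (∑ j, ‖F j (x + (h:AddCircle (1:ℝ))) - F j x‖ ^ 2) ∂haarAddCircle :=
          (integral_finset_sum _ fun j _ => cont_integrable ((hGc j h).norm.pow 2)).symm
  have ptws : ∀ (h t : ℝ),
      (∑ j, ‖F j (((t:ℝ) : AddCircle (1:ℝ)) + ((h:ℝ):AddCircle (1:ℝ)))
        - F j ((t:ℝ) : AddCircle (1:ℝ))‖ ^ 2) = ‖r (t + h) - r t‖ ^ 2 := by
    intro h t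
    have hc : ((t:ℝ) : AddCircle (1:ℝ)) + ((h:ℝ):AddCircle (1:ℝ))
        = ((t + h : ℝ) : AddCircle (1:ℝ)) := by
      norm_cast
    rw [hc]
    have e : ∀ j, F j ((t + h : ℝ) : AddCircle (1:ℝ)) - F j ((t:ℝ):AddCircle (1:ℝ))
        = ((r (t+h) j - r t j : ℝ) : ℂ) := by
      intro j; rw [hFcoe, hFcoe]; simp [hfdef]
    calc (∑ j, ‖F j ((t + h : ℝ) : AddCircle (1:ℝ)) - F j ((t:ℝ):AddCircle (1:ℝ))‖^2)
        = ∑ j, ‖r (t+h) j - r t j‖^2 := by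
          refine Finset.sum_congr rfl fun j _ => ?_
          rw [e j, Complex.norm_real]
      _ = ‖r (t+h) - r t‖ ^ 2 := by
          rw [EuclideanSpace.norm_eq, Real.sq_sqrt (Finset.sum_nonneg fun j _ => sq_nonneg _)]
          refine Finset.sum_congr rfl fun j _ => ?_
          congr 1
  have Tle : ∀ h : ℝ, ∑' n : ℤ, wgt h n * A n ≤ h ^ 2 := by
    intro h
    rw [(main h).2]
    have hint : Integrable (fun x : AddCircle (1:ℝ) =>
        ∑ j, ‖F j (x + (h:AddCircle (1:ℝ))) - F j x‖^2) haarAddCircle :=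
      cont_integrable (continuous_finset_sum _ fun j _ => (hGc j h).norm.pow 2)
    calc ∫ x : AddCircle (1:ℝ),
          (∑ j, ‖F j (x + (h:AddCircle (1:ℝ))) - F j x‖^2) ∂haarAddCircle
        ≤ ∫ _x : AddCircle (1:ℝ), h^2 ∂haarAddCircle := by
          refine integral_mono hint (integrable_const _) ?_
          intro x
          obtain ⟨t, rfl⟩ := rep x
          have hle : ‖r (t + h) - r t‖ ≤ |h| := by
            have hd := hrl.dist_le_mul (t + h) t
            simpa [dist_eq_norm, Real.dist_eq, add_sub_cancel_left] using hd
          calc (∑ j, ‖F j (((t:ℝ):AddCircle (1:ℝ)) + (h:AddCircle (1:ℝ))) - F j ((t:ℝ):AddCircle (1:ℝ))‖^2)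
              = ‖r (t + h) - r t‖^2 := ptws h t
            _ ≤ |h|^2 := pow_le_pow_left₀ (norm_nonneg _) hle 2
            _ = h^2 := sq_abs h
      _ = h^2 := by simp
  have Tge : m ^ 2 ≤ ∑' n : ℤ, wgt s n * A n := by
    rw [(main s).2]
    have hint : Integrable (fun x : AddCircle (1:ℝ) =>
        ∑ j, ‖F j (x + (s:AddCircle (1:ℝ))) - F j x‖^2) haarAddCircle :=
      cont_integrable (continuous_finset_sum _ fun j _ => (hGc j s).norm.pow 2)
    calc m^2 = ∫ _x : AddCircle (1:ℝ), m^2 ∂haarAddCircle := by simp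
      _ ≤ ∫ x : AddCircle (1:ℝ),
            (∑ j, ‖F j (x + (s:AddCircle (1:ℝ))) - F j x‖^2) ∂haarAddCircle := by
          refine integral_mono (integrable_const _) hint ?_
          intro x
          obtain ⟨t, rfl⟩ := rep x
          calc m^2 ≤ ‖r (t + s) - r t‖^2 := pow_le_pow_left₀ hm0 (hmin t) 2
            _ = _ := (ptws s t).symm
  have BB : ∀ u : Finset ℤ, ∑ n ∈ u, (4 * π^2 * (n:ℝ)^2) * A n ≤ 1 := by
    intro u
    have ev : ∀ h : ℝ, h ≠ 0 → ∑ n ∈ u, (wgt h n / h^2) * A n ≤ 1 := by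
      intro h hh
      have h2 : (0:ℝ) < h^2 := by positivity
      have hsum : ∑ n ∈ u, wgt h n * A n ≤ h^2 :=
        le_trans (Summable.sum_le_tsum u (fun n _ => mul_nonneg (hw0 h n) (hA0 n)) (main h).1) (Tle h)
      have hre : ∑ n ∈ u, (wgt h n / h^2) * A n = (∑ n ∈ u, wgt h n * A n) / h^2 := by
        rw [Finset.sum_div]; refine Finset.sum_congr rfl fun n _ => ?_; ring
      rw [hre, div_le_one h2]
      exact hsum
    have lim : Tendsto (fun h : ℝ => ∑ n ∈ u, (wgt h n / h^2) * A n) (𝓝[≠] (0:ℝ))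
        (𝓝 (∑ n ∈ u, (4 * π^2 * (n:ℝ)^2) * A n)) := by
      refine tendsto_finset_sum _ fun n _ => ?_
      have heq : ∀ h : ℝ, wgt h n / h^2 = 4 * (Real.sin (π * n * h) / h)^2 := by
        intro h; simp only [hwdef]; rw [div_pow]; ring
      have hd : HasDerivAt (fun h : ℝ => Real.sin (π * n * h)) (π * n) 0 := by
        have h0 : HasDerivAt (fun h : ℝ => (π * (n:ℝ)) * h) (π * n) 0 := by
          simpa using (hasDerivAt_id (0:ℝ)).const_mul (π * (n:ℝ))
        have hcomp := (Real.hasDerivAt_sin ((π * (n:ℝ)) * 0)).comp 0 h0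
        simp only [mul_zero, Real.cos_zero, one_mul] at hcomp
        exact hcomp
      have hslope := hasDerivAt_iff_tendsto_slope.mp hd
      have hs2 : Tendsto (fun h : ℝ => Real.sin (π * n * h) / h) (𝓝[≠] 0) (𝓝 (π * n)) := by
        refine Tendsto.congr (fun h => ?_) hslope
        rw [slope_def_field]
        simp
      have hfin : Tendsto (fun h : ℝ => wgt h n / h^2) (𝓝[≠] 0) (𝓝 (4 * π^2 * (n:ℝ)^2)) := by
        have h4 : (4:ℝ) * π^2 * (n:ℝ)^2 = 4 * (π*(n:ℝ))^2 := by ring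
        rw [h4]
        exact Tendsto.congr (fun h => (heq h).symm) ((hs2.pow 2).const_mul (4:ℝ))
      exact hfin.mul_const (A n)
    refine le_of_tendsto lim ?_
    exact eventually_nhdsWithin_of_forall fun h hh => ev h hh
  have hBsum : Summable (fun n : ℤ => (4 * π^2 * (n:ℝ)^2) * A n) :=
    summable_of_sum_le (fun n => mul_nonneg (by positivity) (hA0 n)) BB
  have hBtsum : ∑' n : ℤ, (4 * π^2 * (n:ℝ)^2) * A n ≤ 1 := hBsum.tsum_le_of_sum_le BB
  have cmp : ∀ n : ℤ, wgt s n * A n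
      ≤ Real.sin (π*s)^2/π^2 * ((4 * π^2 * (n:ℝ)^2) * A n) := by
    intro n
    have h1 : Real.sin (π * n * s)^2 ≤ (n:ℝ)^2 * Real.sin (π*s)^2 := by
      have h2 := abs_sin_int_mul_le n (π * s)
      have h3 : |Real.sin ((n:ℝ) * (π * s))| ^2 ≤ (|(n:ℝ)| * |Real.sin (π*s)|)^2 :=
        pow_le_pow_left₀ (abs_nonneg _) h2 2
      calc Real.sin (π*n*s)^2 = |Real.sin ((n:ℝ)*(π*s))|^2 := by rw [sq_abs]; ring_nf
        _ ≤ (|(n:ℝ)| * |Real.sin (π*s)|)^2 := h3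
        _ = (n:ℝ)^2 * Real.sin (π*s)^2 := by rw [mul_pow, sq_abs, sq_abs]
    have e : Real.sin (π*s)^2/π^2 * ((4 * π^2 * (n:ℝ)^2) * A n)
        = (4 * ((n:ℝ)^2 * Real.sin (π*s)^2)) * A n := by
      have hπ : (π:ℝ) ≠ 0 := Real.pi_ne_zero
      field_simp
    rw [e]
    simp only [hwdef]
    exact mul_le_mul_of_nonneg_right (by linarith) (hA0 n)
  calc m^2 ≤ ∑' n : ℤ, wgt s n * A n := Tge
    _ ≤ ∑' n : ℤ, Real.sin (π*s)^2/π^2 * ((4 * π^2 * (n:ℝ)^2) * A n) :=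
        Summable.tsum_le_tsum cmp (main s).1 (hBsum.mul_left _)
    _ = Real.sin (π*s)^2/π^2 * ∑' n : ℤ, (4 * π^2 * (n:ℝ)^2) * A n := tsum_mul_left
    _ ≤ Real.sin (π*s)^2/π^2 * 1 := mul_le_mul_of_nonneg_left hBtsum (by positivity)
    _ = Real.sin (π*s)^2/π^2 := mul_one _


end ShortChordAux

theorem exists_short_chord (d : ℕ) (hd : 2 ≤ d)
    (r : ℝ → EuclideanSpace ℝ (Fin d)) (hr : IsUnitClosedCurve d r)
    (s : ℝ) (hs : s ∈ Icc (0:ℝ) (1 / 2)) :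
    ∃ t ∈ Icc (0:ℝ) 1, ‖r (t + s) - r t‖ ≤ Real.sin (π * s) / π := by
  obtain ⟨hrc, hrp, hrl, -⟩ := hr
  have hgc : Continuous fun t : ℝ => ‖r (t + s) - r t‖ :=
    ((hrc.comp (continuous_id.add continuous_const)).sub hrc).norm
  obtain ⟨t₀, ht₀, hmin⟩ := (isCompact_Icc (a := (0:ℝ)) (b := 1)).exists_isMinOn
      ⟨0, by norm_num⟩ hgc.continuousOn
  refine ⟨t₀, ht₀, ?_⟩
  have hper : Periodic (fun t : ℝ => ‖r (t + s) - r t‖) 1 := by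
    intro t
    simp only []
    rw [show t + 1 + s = (t + s) + 1 by ring, hrp, hrp]
  have hmin' : ∀ t : ℝ, ‖r (t₀ + s) - r t₀‖ ≤ ‖r (t + s) - r t‖ := by
    intro t
    obtain ⟨y, hy, hEq⟩ := hper.exists_mem_Ico₀ one_pos t
    rw [hEq]
    exact hmin (Ico_subset_Icc_self hy)
  have hkey := key_ineq r hrc hrp hrl s _ (norm_nonneg _) hmin'
  have hsin : 0 ≤ Real.sin (π * s) := by
    apply Real.sin_nonneg_of_nonneg_of_le_pi
    · exact mul_nonneg Real.pi_pos.le hs.1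
    · nlinarith [Real.pi_pos, hs.2, hs.1]
  have hrhs : 0 ≤ Real.sin (π * s) / π := div_nonneg hsin Real.pi_pos.le
  have h2 : ‖r (t₀ + s) - r t₀‖ ^ 2 ≤ (Real.sin (π * s) / π) ^ 2 := by
    rw [div_pow]; exact hkey
  exact (pow_le_pow_iff_left₀ (norm_nonneg _) hrhs two_ne_zero).mp h2


end
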